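/- Let (L₁, …, L_h; w₁, …, w_h) be a vertex hierarchy of height h on the weighted graph G = (V, w₁). Then for all s, t ∈ V and every common ancestor x ∈ Anc(s) ∩ Anc(t): dist_G(s,t) ≤ d(s,x) + d(t,x); in particular, if s and t have a common ancestor then s and t are connected in G, i.e. dist_G(s,t) < ⊤. -/

import Mathlib

namespace ISLabel

variable {V : Type*}

/-- Two vertices are adjacent in the weighted graph `w` when they are distinct and
joined by an edge of finite weight. -/
def Adj (w : V → V → ℕ∞) (u v : V) : Prop := u ≠ v ∧ w u v < ⊤

/-- `p` is a walk from `u` to `v` in the weighted graph `w`: a nonempty list of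
vertices starting at `u`, ending at `v`, with consecutive vertices adjacent. -/
def IsWalk (w : V → V → ℕ∞) (u v : V) (p : List V) : Prop :=
  p ≠ [] ∧ p.head? = some u ∧ p.getLast? = some v ∧ p.Chain' (Adj w)

/-- The length of a list of vertices: the sum of `f` over consecutive pairs. -/
def pathLen (f : V → V → ℕ∞) (p : List V) : ℕ∞ :=
  ((p.zip p.tail).map fun e => f e.1 e.2).sum

/-- The distance from `u` to `v` in `w`: the infimum of the lengths of all walks
from `u` to `v` (`⊤` if there is no such walk). -/
noncomputable def wdist (w : V → V → ℕ∞) (u v : V) : ℕ∞ :=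
  ⨅ p : {p : List V // IsWalk w u v p}, pathLen w p.1

/-- `I` is an independent set in `w`. -/
def IsIndep (w : V → V → ℕ∞) (I : Set V) : Prop :=
  ∀ u ∈ I, ∀ v ∈ I, ¬ Adj w u v

/-- `w` is a weighted undirected graph: symmetric, and every off-diagonal value is
either `⊤` (no edge) or a weight `≥ 1`. -/
def IsWGraph (w : V → V → ℕ∞) : Prop :=
  (∀ u v, w u v = w v u) ∧ ∀ u v, u ≠ v → 1 ≤ w u v

/-- `w` is supported on `S`: all weights touching a vertex outside `S` are `⊤`. -/
def SupportedOn (w : V → V → ℕ∞) (S : Set V) : Prop :=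
  ∀ u v, u ∉ S ∨ v ∉ S → w u v = ⊤

/-- `VsetOf L i` is the vertex set `V_i = V ∖ (L₁ ∪ … ∪ L_{i-1})`. -/
def VsetOf (L : ℕ → Set V) (i : ℕ) : Set V := {v | ∀ j, 1 ≤ j → j < i → v ∉ L j}

/-- A vertex hierarchy of height `h ≥ 1` on the weighted graph `w 1`:
pairwise disjoint independent levels `L 1, …, L h` covering `V`, and graphs
`w i` supported on `V_i` obtained by the augmenting-edge construction. -/
structure VertexHierarchy (V : Type*) (h : ℕ) where
  L : ℕ → Set V
  w : ℕ → V → V → ℕ∞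
  h_pos : 1 ≤ h
  wgraph : ∀ i, 1 ≤ i → i ≤ h → IsWGraph (w i)
  disj : ∀ i j, 1 ≤ i → i ≤ h → 1 ≤ j → j ≤ h → i ≠ j → ∀ v, v ∈ L i → v ∉ L j
  cover : ∀ v : V, ∃ i, 1 ≤ i ∧ i ≤ h ∧ v ∈ L i
  supported : ∀ i, 1 ≤ i → i ≤ h → SupportedOn (w i) (VsetOf L i)
  aug : ∀ i, 2 ≤ i → i ≤ h → ∀ u v : V, u ≠ v → u ∈ VsetOf L i → v ∈ VsetOf L i →
    w i u v = min (w (i - 1) u v) (⨅ x ∈ L (i - 1), w (i - 1) u x + w (i - 1) x v)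
  indep : ∀ i, 1 ≤ i → i ≤ h → IsIndep (w i) (L i)

/-- The level `ℓ(v)`: the unique `i` with `1 ≤ i ≤ h` and `v ∈ L i`. -/
noncomputable def level {h : ℕ} (H : VertexHierarchy V h) (v : V) : ℕ :=
  sInf {i | 1 ≤ i ∧ i ≤ h ∧ v ∈ H.L i}

/-- One step of an ascending sequence: go to a strictly higher-level vertex that is
adjacent in the graph at the current vertex's level. -/
def AscStep {h : ℕ} (H : VertexHierarchy V h) (a b : V) : Prop :=
  level H a < level H b ∧ Adj (H.w (level H a)) a b

/-- `p` is an ascending sequence from `v` to `u`. -/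
def IsAscending {h : ℕ} (H : VertexHierarchy V h) (v u : V) (p : List V) : Prop :=
  p ≠ [] ∧ p.head? = some v ∧ p.getLast? = some u ∧ p.Chain' (AscStep H)

/-- The set of ancestors of `v`. -/
def Anc {h : ℕ} (H : VertexHierarchy V h) (v : V) : Set V :=
  {u | ∃ p, IsAscending H v u p}

/-- `d(v,u)`: the infimum of the lengths of ascending sequences from `v` to `u`,
where each step `a → b` costs `w (ℓ(a)) a b`; `⊤` if `u` is not an ancestor of `v`. -/
noncomputable def ancDist {h : ℕ} (H : VertexHierarchy V h) (v u : V) : ℕ∞ :=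
  ⨅ p : {p : List V // IsAscending H v u p},
    pathLen (fun a b => H.w (level H a) a b) p.1

section Aux

variable {V : Type*}

lemma pathLen_singleton (f : V → V → ℕ∞) (a : V) : pathLen f [a] = 0 := by
  simp [pathLen]

lemma pathLen_cons_cons (f : V → V → ℕ∞) (a b : V) (l : List V) :
    pathLen f (a :: b :: l) = f a b + pathLen f (b :: l) := by
  simp [pathLen]

lemma pathLen_append (f : V → V → ℕ∞) :
    ∀ (p : List V) (x : V) (r : List V), p.getLast? = some x →
      pathLen f (p ++ r) = pathLen f p + pathLen f (x :: r)
  | [], x, r => by simp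
  | [a], x, r => by
      intro hx
      simp only [List.getLast?_singleton, Option.some.injEq] at hx
      subst hx
      simp [pathLen_singleton]
  | a :: b :: l, x, r => by
      intro hx
      rw [List.getLast?_cons_cons] at hx
      have ih := pathLen_append f (b :: l) x r hx
      show pathLen f (a :: b :: (l ++ r)) = _
      rw [pathLen_cons_cons, pathLen_cons_cons]
      rw [show (b :: (l ++ r)) = (b :: l) ++ r from rfl, ih, add_assoc]

lemma enat_exists_eq_iInf {ι : Sort*} [Nonempty ι] (f : ι → ℕ∞) : ∃ i, f i = ⨅ j, f j := by
  obtain ⟨m, hm, hmin⟩ := wellFounded_lt.has_min (Set.range f) (Set.range_nonempty f)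
  obtain ⟨i, rfl⟩ := hm
  refine ⟨i, le_antisymm (le_iInf fun j => not_lt.1 (hmin _ ⟨j, rfl⟩)) (iInf_le _ i)⟩

lemma enat_le_iInf_add_iInf {ι ι' : Sort*} {a : ℕ∞} {f : ι → ℕ∞} {g : ι' → ℕ∞}
    (h : ∀ i j, a ≤ f i + g j) : a ≤ (⨅ i, f i) + ⨅ j, g j := by
  rcases isEmpty_or_nonempty ι with hι | hι
  · simp [iInf_of_empty]
  rcases isEmpty_or_nonempty ι' with hι' | hι'
  · simp [iInf_of_empty]
  obtain ⟨i, hi⟩ := enat_exists_eq_iInf f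
  obtain ⟨j, hj⟩ := enat_exists_eq_iInf g
  rw [← hi, ← hj]; exact h i j

lemma wdist_le_pathLen {w : V → V → ℕ∞} {u v : V} {p : List V} (hp : IsWalk w u v p) :
    wdist w u v ≤ pathLen w p :=
  iInf_le (fun q : {q : List V // IsWalk w u v q} => pathLen w q.1) ⟨p, hp⟩

lemma wdist_self (w : V → V → ℕ∞) (v : V) : wdist w v v ≤ 0 := by
  have : IsWalk w v v [v] := ⟨by simp, by simp, by simp, List.isChain_singleton _⟩
  simpa [pathLen_singleton] using wdist_le_pathLen this

lemma wdist_le_edge (w : V → V → ℕ∞) (u v : V) (huv : u ≠ v) : wdist w u v ≤ w u v := by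
  rcases eq_or_lt_of_le (le_top : w u v ≤ ⊤) with h | h
  · simp [h]
  have hw : IsWalk w u v [u, v] := ⟨by simp, by simp, by simp, List.isChain_pair.2 ⟨huv, h⟩⟩
  simpa [pathLen_cons_cons, pathLen_singleton] using wdist_le_pathLen hw

lemma IsWalk.append {w : V → V → ℕ∞} {u x v : V} {p q : List V}
    (hp : IsWalk w u x p) (hq : IsWalk w x v q) :
    IsWalk w u v (p ++ q.tail) ∧ pathLen w (p ++ q.tail) = pathLen w p + pathLen w q := by
  obtain ⟨hpne, hph, hpl, hpc⟩ := hp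
  obtain ⟨hqne, hqh, hql, hqc⟩ := hq
  obtain ⟨c, t, rfl⟩ : ∃ c t, q = c :: t := ⟨q.head hqne, q.tail, (List.cons_head_tail hqne).symm⟩
  simp only [List.head?_cons, Option.some.injEq] at hqh
  subst hqh
  simp only [List.tail_cons]
  constructor
  · refine ⟨by simp [hpne], ?_, ?_, ?_⟩
    · rcases p with _ | ⟨a, l⟩
      · exact absurd rfl hpne
      · simpa using hph
    · rcases t with _ | ⟨b, t'⟩
      · simp only [List.append_nil, hpl]
        simpa using hql
      · rw [List.getLast?_append_of_ne_nil p (by simp : (b :: t') ≠ [])]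
        simpa using hql
    · refine hpc.append (List.isChain_cons.1 hqc).2 ?_
      intro a ha b hb
      have hax : a = c := by rw [hpl] at ha; exact (by simpa using ha : c = a).symm
      subst hax
      exact (List.isChain_cons.1 hqc).1 b hb
  · rw [pathLen_append w p c t hpl]

lemma pathLen_lt_top {R : V → V → Prop} {f : V → V → ℕ∞}
    (hf : ∀ a b, R a b → f a b < ⊤) :
    ∀ p : List V, p.Chain' R → pathLen f p < ⊤
  | [] => by intro _; simp [pathLen]
  | [a] => by intro _; simp [pathLen_singleton]
  | a :: b :: l => by
      intro hc
      obtain ⟨hab, hc'⟩ := List.isChain_cons_cons.1 hc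
      rw [pathLen_cons_cons]
      exact ENat.add_lt_top.2 ⟨hf _ _ hab, pathLen_lt_top hf (b :: l) hc'⟩

lemma wdist_triangle (w : V → V → ℕ∞) (u x v : V) :
    wdist w u v ≤ wdist w u x + wdist w x v := by
  refine enat_le_iInf_add_iInf fun p q => ?_
  obtain ⟨hw, hlen⟩ := IsWalk.append p.2 q.2
  exact (wdist_le_pathLen hw).trans (le_of_eq hlen)

lemma level_spec {h : ℕ} (H : VertexHierarchy V h) (v : V) :
    1 ≤ level H v ∧ level H v ≤ h ∧ v ∈ H.L (level H v) := by
  have hne : {i | 1 ≤ i ∧ i ≤ h ∧ v ∈ H.L i}.Nonempty := H.cover v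
  exact Nat.sInf_mem hne

lemma wdist_le_w {h : ℕ} (H : VertexHierarchy V h) :
    ∀ i, 1 ≤ i → i ≤ h → ∀ u v : V, wdist (H.w 1) u v ≤ H.w i u v := by
  intro i
  induction i with
  | zero => omega
  | succ n ih =>
    intro _ hle u v
    rcases Nat.eq_zero_or_pos n with rfl | hn
    · rcases eq_or_ne u v with rfl | huv
      · exact (wdist_self _ _).trans zero_le
      · exact wdist_le_edge _ u v huv
    rcases eq_or_ne u v with rfl | huv
    · exact (wdist_self _ _).trans zero_le
    by_cases hu : u ∈ VsetOf H.L (n + 1)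
    · by_cases hv : v ∈ VsetOf H.L (n + 1)
      · rw [H.aug (n + 1) (by omega) hle u v huv hu hv]
        simp only [Nat.add_sub_cancel]
        refine le_min (ih hn (by omega) u v) ?_
        refine le_iInf fun y => le_iInf fun _ => ?_
        exact (wdist_triangle _ u y v).trans
          (add_le_add (ih hn (by omega) u y) (ih hn (by omega) y v))
      · rw [H.supported (n + 1) (by omega) hle u v (Or.inr hv)]; exact le_top
    · rw [H.supported (n + 1) (by omega) hle u v (Or.inl hu)]; exact le_top

lemma wdist_le_pathLen_asc {h : ℕ} (H : VertexHierarchy V h) :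
    ∀ (p : List V) (u v : V), p.head? = some u → p.getLast? = some v →
      p.Chain' (AscStep H) →
      wdist (H.w 1) u v ≤ pathLen (fun a b => H.w (level H a) a b) p ∧
      wdist (H.w 1) v u ≤ pathLen (fun a b => H.w (level H a) a b) p
  | [], u, v => by intro h1; simp at h1
  | [a], u, v => by
      intro h1 h2 _
      simp only [List.head?_cons, Option.some.injEq] at h1
      simp only [List.getLast?_singleton, Option.some.injEq] at h2
      subst h1; subst h2
      rw [pathLen_singleton]
      exact ⟨wdist_self _ _, wdist_self _ _⟩
  | a :: b :: l, u, v => by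
      intro h1 h2 hc
      simp only [List.head?_cons, Option.some.injEq] at h1
      subst h1
      rw [List.getLast?_cons_cons] at h2
      obtain ⟨hab, hc'⟩ := List.isChain_cons_cons.1 hc
      obtain ⟨ih1, ih2⟩ := wdist_le_pathLen_asc H (b :: l) b v rfl h2 hc'
      have hlev : 1 ≤ level H a ∧ level H a ≤ h := by
        obtain ⟨h1', h2', _⟩ := level_spec H a; exact ⟨h1', h2'⟩
      have hedge : wdist (H.w 1) a b ≤ H.w (level H a) a b :=
        wdist_le_w H (level H a) hlev.1 hlev.2 a b
      have hsymm : H.w (level H a) b a = H.w (level H a) a b :=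
        (H.wgraph (level H a) hlev.1 hlev.2).1 b a
      have hedge' : wdist (H.w 1) b a ≤ H.w (level H a) a b := by
        rw [← hsymm]; exact wdist_le_w H (level H a) hlev.1 hlev.2 b a
      rw [pathLen_cons_cons]
      constructor
      · exact (wdist_triangle _ a b v).trans (add_le_add hedge ih1)
      · refine (wdist_triangle _ v b a).trans ?_
        rw [add_comm]
        exact add_le_add hedge' ih2

end Aux

/-- common ancestors give upper bounds on the distance; in
particular vertices with a common ancestor are connected. -/
theorem dist_le_common_ancestor [Fintype V] {h : ℕ} (H : VertexHierarchy V h) :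
    ∀ s t : V,
      (∀ x ∈ Anc H s ∩ Anc H t,
        wdist (H.w 1) s t ≤ ancDist H s x + ancDist H t x) ∧
      ((Anc H s ∩ Anc H t).Nonempty → wdist (H.w 1) s t < ⊤) := by
  intro s t
  have key : ∀ x ∈ Anc H s ∩ Anc H t,
      wdist (H.w 1) s t ≤ ancDist H s x + ancDist H t x := by
    intro x _
    have h1 : wdist (H.w 1) s x ≤ ancDist H s x :=
      le_iInf fun p => (wdist_le_pathLen_asc H p.1 s x p.2.2.1 p.2.2.2.1 p.2.2.2.2).1
    have h2 : wdist (H.w 1) x t ≤ ancDist H t x :=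
      le_iInf fun p => (wdist_le_pathLen_asc H p.1 t x p.2.2.1 p.2.2.2.1 p.2.2.2.2).2
    exact (wdist_triangle _ s x t).trans (add_le_add h1 h2)
  refine ⟨key, ?_⟩
  rintro ⟨x, hxs, hxt⟩
  have hfin : ∀ v : V, x ∈ Anc H v → ancDist H v x < ⊤ := by
    rintro v ⟨p, hp⟩
    have hle : ancDist H v x ≤ pathLen (fun a b => H.w (level H a) a b) p :=
      iInf_le (fun q : {q : List V // IsAscending H v x q} =>
        pathLen (fun a b => H.w (level H a) a b) q.1) ⟨p, hp⟩
    exact lt_of_le_of_lt hle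
      (pathLen_lt_top (fun a b hab => hab.2.2) p hp.2.2.2)
  exact lt_of_le_of_lt (key x ⟨hxs, hxt⟩)
    (ENat.add_lt_top.2 ⟨hfin s hxs, hfin t hxt⟩)


end ISLabel
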